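/- Let τ > 0, let T > 0, and let θ : ℝ → ℝ be a twice continuously differentiable T-periodic function satisfying θ''(t) + τ·θ'(t) + θ(t)² − 1 = 0 for all t ∈ ℝ. Then θ is constant. -/

import Mathlib

/-- For `τ > 0`, any twice continuously differentiable `T`-periodic solution of
`θ'' + τθ' + θ² - 1 = 0` on `ℝ` is constant (no cycles, by the Bendixson criterion). -/
theorem stmt_10 (τ T : ℝ) (hτ : 0 < τ) (hT : 0 < T) (θ θ' θ'' : ℝ → ℝ)
    (hd1 : ∀ t : ℝ, HasDerivAt θ (θ' t) t)
    (hd2 : ∀ t : ℝ, HasDerivAt θ' (θ'' t) t)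
    (hc : Continuous θ'')
    (hper : Function.Periodic θ T)
    (heq : ∀ t : ℝ, θ'' t + τ * θ' t + (θ t) ^ 2 - 1 = 0) :
    ∀ s t : ℝ, θ s = θ t := by
  -- θ' is periodic
  have hper' : Function.Periodic θ' T := by
    intro t
    have h1 : HasDerivAt (fun s => θ (s + T)) (θ' (t + T)) t := by
      simpa [Function.comp_def] using (hd1 (t + T)).comp t ((hasDerivAt_id t).add_const T)
    have h2 : (fun s => θ (s + T)) = θ := funext fun s => hper s
    rw [h2] at h1
    exact h1.unique (hd1 t)
  -- energy function
  set E : ℝ → ℝ := fun t => θ' t ^ 2 / 2 + θ t ^ 3 / 3 - θ t with hEdef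
  have hE : ∀ t, HasDerivAt E (-(τ * θ' t ^ 2)) t := by
    intro t
    have h : HasDerivAt E (2 * θ' t ^ 1 * θ'' t / 2 + 3 * θ t ^ 2 * θ' t / 3 - θ' t) t := by
      exact ((((hd2 t).pow 2).div_const 2).add (((hd1 t).pow 3).div_const 3)).sub (hd1 t)
    have key : θ'' t = 1 - θ t ^ 2 - τ * θ' t := by linarith [heq t]
    convert h using 1
    rw [key]; ring
  have hEper : Function.Periodic E T := by
    intro t; simp [hEdef, hper t, hper' t]
  have hAnti : Antitone E := by
    apply antitone_of_deriv_nonpos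
    · exact fun t => (hE t).differentiableAt
    · intro t
      rw [(hE t).deriv]
      nlinarith [sq_nonneg (θ' t)]
  have hEconst : ∀ a b : ℝ, E a = E b := by
    have key : ∀ a b : ℝ, a ≤ b → E a = E b := by
      intro a b hab
      obtain ⟨n, hn⟩ := exists_nat_gt ((b - a) / T)
      have hle : b ≤ a + n * T := by
        have := (div_lt_iff₀ hT).mp hn
        linarith
      have h1 : E (a + n * T) ≤ E b := hAnti hle
      have h2 : E b ≤ E a := hAnti hab
      have h3 : E (a + n * T) = E a := (hEper.nat_mul n) a
      linarith
    intro a b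
    rcases le_total a b with h | h
    · exact key a b h
    · exact (key b a h).symm
  -- θ' = 0 everywhere
  have hθ'0 : ∀ t, θ' t = 0 := by
    intro t
    have hEc : E = fun _ => E 0 := funext fun s => hEconst s 0
    have h0 : HasDerivAt E 0 t := by rw [hEc]; exact hasDerivAt_const t _
    have := (hE t).unique h0
    have : θ' t ^ 2 = 0 := by
      by_contra h
      have : 0 < θ' t ^ 2 := lt_of_le_of_ne (sq_nonneg _) (Ne.symm h)
      nlinarith
    exact pow_eq_zero_iff (n := 2) (by norm_num) |>.mp this
  intro s t
  exact is_const_of_deriv_eq_zero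
    (fun x => (hd1 x).differentiableAt)
    (fun x => by rw [(hd1 x).deriv, hθ'0 x]) s t
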